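/- arXiv:math/9607223 — 2 statements merged into one kernel-verified Lean document; each statement's English description precedes it below -/
import Mathlib

section
/- Let r ≥ 1 and 1 ≤ k ≤ r be integers, let m_{k+1}, …, m_r be integers with m_u ≥ 2 for every u, and set c₁ = k + ∑_{u=k+1}^r m_u. Assume c₁ < 2r. Then for every integer i ≥ 0, the coefficient of t^i in the polynomial (1+t)^{2r−c₁−1+i} · ∏_{u=k+1}^r (1 − (m_u − 1)·t)^{m_u − 2} equals the coefficient of t^i in the formal power series ((1−t)^k)^{−1} · ∏_{u=k+1}^r (1 − m_u·t)^{m_u − 2} in ℤ⟦t⟧. -/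
/-- The key coefficient identity from the proof of Lemma 5.12: for `1 ≤ k ≤ r`,
`m_u ≥ 2` for `k+1 ≤ u ≤ r` (0-indexed: `k ≤ u < r`), and
`c₁ = k + ∑_{u=k+1}^r m_u < 2r`, the coefficient of `t^i` in the polynomial
`(1+t)^{2r−c₁−1+i} · ∏_{u>k} (1 − (m_u−1)t)^{m_u−2}` equals the coefficient of `t^i`
in the power series `((1−t)^k)⁻¹ · ∏_{u>k} (1 − m_u t)^{m_u−2}` in `ℤ⟦t⟧`. -/
theorem coeff_poly_eq_coeff_series
    (r k : ℕ) (hr : 1 ≤ r) (hk : 1 ≤ k) (hkr : k ≤ r)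
    (m : Fin r → ℕ) (hm : ∀ u : Fin r, k ≤ (u : ℕ) → 2 ≤ m u)
    (c₁ : ℕ) (hc₁ : c₁ = k + ∑ u ∈ Finset.univ.filter (fun u : Fin r => k ≤ (u : ℕ)), m u)
    (hlt : c₁ < 2 * r) (i : ℕ) :
    Polynomial.coeff
      ((1 + Polynomial.X) ^ (2 * r - c₁ - 1 + i) *
        ∏ u ∈ Finset.univ.filter (fun u : Fin r => k ≤ (u : ℕ)),
          (1 - Polynomial.C ((m u : ℤ) - 1) * Polynomial.X) ^ (m u - 2)) i
    = PowerSeries.coeff (R := ℤ) i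
        (PowerSeries.invOfUnit ((1 - PowerSeries.X) ^ k) 1 *
          ∏ u ∈ Finset.univ.filter (fun u : Fin r => k ≤ (u : ℕ)),
            (1 - PowerSeries.C (R := ℤ) (m u : ℤ) * PowerSeries.X) ^ (m u - 2)) := by
  classical
  set F : Finset (Fin r) := Finset.univ.filter (fun u : Fin r => k ≤ (u : ℕ)) with hF
  -- cardinality of F
  have hcard : F.card = r - k := by
    rw [hF]
    rw [show r - k = (Finset.Ico k r).card by simp]
    apply Finset.card_bij (fun (u : Fin r) _ => (u : ℕ))
    · intro a ha
      simp only [Finset.mem_filter, Finset.mem_univ, true_and] at ha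
      simp [Finset.mem_Ico, ha, a.isLt]
    · intro a _ b _ h
      exact Fin.ext h
    · intro b hb
      simp only [Finset.mem_Ico] at hb
      exact ⟨⟨b, hb.2⟩, by simp [hb.1], rfl⟩
  set s : ℕ := ∑ u ∈ F, m u with hs
  have hs2 : 2 * (r - k) ≤ s := by
    rw [hs, ← hcard]
    calc 2 * F.card = ∑ _u ∈ F, 2 := by rw [Finset.sum_const, smul_eq_mul, mul_comm]
    _ ≤ ∑ u ∈ F, m u := Finset.sum_le_sum (fun u hu => hm u (by simpa [hF] using hu))
  set D : ℕ := ∑ u ∈ F, (m u - 2) with hD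
  have hDs : D = s - 2 * (r - k) := by
    rw [hD, Finset.sum_tsub_distrib _ (fun u hu => hm u (by simpa [hF] using hu)), hs,
      Finset.sum_const, smul_eq_mul, hcard, mul_comm]
  set K : ℕ := 2 * r - c₁ with hK
  have hkKD : k = K + D := by omega
  have hK1 : 1 ≤ K := by omega
  set Q : Polynomial ℤ :=
    ∏ u ∈ F, (1 - Polynomial.C ((m u : ℤ) - 1) * Polynomial.X) ^ (m u - 2) with hQ
  have hdeg : Q.natDegree ≤ D := by
    rw [hQ, hD]
    refine le_trans (Polynomial.natDegree_prod_le _ _) (Finset.sum_le_sum fun u hu => ?_)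
    refine le_trans (Polynomial.natDegree_pow_le) ?_
    have h1 : (1 - Polynomial.C ((m u : ℤ) - 1) * Polynomial.X).natDegree ≤ 1 := by
      refine le_trans (Polynomial.natDegree_sub_le _ _) ?_
      simp only [Polynomial.natDegree_one, max_le_iff]
      exact ⟨Nat.zero_le _, le_trans (Polynomial.natDegree_C_mul_le _ _) (by simp)⟩
    calc (m u - 2) * (1 - Polynomial.C ((m u : ℤ) - 1) * Polynomial.X).natDegree
        ≤ (m u - 2) * 1 := Nat.mul_le_mul_left _ h1
      _ = m u - 2 := mul_one _
  -- the exponent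
  set N : ℕ := K - 1 + i with hNdef
  -- LHS
  have hL : Polynomial.coeff ((1 + Polynomial.X) ^ N * Q) i
      = ∑ j ∈ Finset.range (i + 1), N.choose (i - j) * Q.coeff j := by
    rw [Polynomial.coeff_mul, Finset.Nat.sum_antidiagonal_eq_sum_range_succ_mk,
      ← Finset.sum_range_reflect]
    refine Finset.sum_congr rfl fun j hj => ?_
    simp only [Finset.mem_range] at hj
    have hji : j ≤ i := Nat.lt_succ_iff.mp hj
    rw [Polynomial.coeff_one_add_X_pow]
    have h1 : i + 1 - 1 - j = i - j := by omega
    have h2 : i - (i - j) = j := by omega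
    rw [h1, h2]
  -- identify the inverse
  have hconst : PowerSeries.constantCoeff (R := ℤ) ((1 - PowerSeries.X) ^ k) = ((1 : ℤˣ) : ℤ) := by
    simp
  have hui : ((1 - PowerSeries.X) ^ k : PowerSeries ℤ) *
      PowerSeries.invOfUnit ((1 - PowerSeries.X) ^ k) 1 = 1 :=
    PowerSeries.mul_invOfUnit _ 1 hconst
  have hval : (PowerSeries.invOneSubPow ℤ k).val * ((1 - PowerSeries.X) ^ k : PowerSeries ℤ) = 1 := by
    rw [← PowerSeries.invOneSubPow_inv_eq_one_sub_pow]
    exact (PowerSeries.invOneSubPow ℤ k).val_inv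
  have hinv : PowerSeries.invOfUnit ((1 - PowerSeries.X) ^ k : PowerSeries ℤ) 1
      = (PowerSeries.invOneSubPow ℤ k).val := by
    calc PowerSeries.invOfUnit ((1 - PowerSeries.X) ^ k : PowerSeries ℤ) 1
        = ((PowerSeries.invOneSubPow ℤ k).val * ((1 - PowerSeries.X) ^ k))
          * PowerSeries.invOfUnit ((1 - PowerSeries.X) ^ k) 1 := by rw [hval, one_mul]
      _ = (PowerSeries.invOneSubPow ℤ k).val * (((1 - PowerSeries.X) ^ k)
          * PowerSeries.invOfUnit ((1 - PowerSeries.X) ^ k) 1) := by rw [mul_assoc]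
      _ = (PowerSeries.invOneSubPow ℤ k).val := by rw [hui, mul_one]
  -- the series R
  set Rser : PowerSeries ℤ :=
    ∏ u ∈ F, (1 - PowerSeries.C (R := ℤ) (m u : ℤ) * PowerSeries.X) ^ (m u - 2) with hR
  -- substitution element
  set w : PowerSeries ℤ := (PowerSeries.invOneSubPow ℤ 1).val with hw
  have hw1 : (1 - PowerSeries.X : PowerSeries ℤ) * w = 1 := by
    rw [hw]
    have := (PowerSeries.invOneSubPow ℤ 1).inv_val
    rwa [PowerSeries.invOneSubPow_inv_eq_one_sub_pow, pow_one] at this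
  set sub : PowerSeries ℤ := PowerSeries.X * w with hsub
  -- R as binomial transform of Q
  have hRQ : Rser = ∑ j ∈ Finset.range (D + 1),
      PowerSeries.C (R := ℤ) (Q.coeff j) * (PowerSeries.X ^ j * (1 - PowerSeries.X) ^ (D - j)) := by
    have heval : Polynomial.eval₂ (PowerSeries.C (R := ℤ)) sub Q
        = ∑ j ∈ Finset.range (D + 1), PowerSeries.C (R := ℤ) (Q.coeff j) * sub ^ j :=
      Polynomial.eval₂_eq_sum_range' _ (Nat.lt_succ_of_le hdeg) _
    have hfac : ∀ u ∈ F, ((1 - PowerSeries.X : PowerSeries ℤ)) *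
        (1 - PowerSeries.C (R := ℤ) ((m u : ℤ) - 1) * sub)
        = 1 - PowerSeries.C (R := ℤ) (m u : ℤ) * PowerSeries.X := by
      intro u hu
      rw [hsub]
      have : PowerSeries.C (R := ℤ) ((m u : ℤ) - 1) = PowerSeries.C (R := ℤ) (m u : ℤ) - 1 := by
        rw [map_sub, map_one]
      rw [this]
      linear_combination (-(PowerSeries.C (R := ℤ) (m u : ℤ) - 1) * PowerSeries.X) * hw1
    have hQeval : Polynomial.eval₂ (PowerSeries.C (R := ℤ)) sub Q
        = ∏ u ∈ F, (1 - PowerSeries.C (R := ℤ) ((m u : ℤ) - 1) * sub) ^ (m u - 2) := by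
      rw [hQ]
      rw [show Polynomial.eval₂ (PowerSeries.C (R := ℤ)) sub
          (∏ u ∈ F, (1 - Polynomial.C ((m u : ℤ) - 1) * Polynomial.X) ^ (m u - 2))
        = Polynomial.eval₂RingHom (PowerSeries.C (R := ℤ)) sub
          (∏ u ∈ F, (1 - Polynomial.C ((m u : ℤ) - 1) * Polynomial.X) ^ (m u - 2)) from rfl]
      rw [map_prod]
      refine Finset.prod_congr rfl fun u hu => ?_
      simp only [Polynomial.coe_eval₂RingHom, Polynomial.eval₂_pow, Polynomial.eval₂_sub,
        Polynomial.eval₂_mul, Polynomial.eval₂_one, Polynomial.eval₂_C, Polynomial.eval₂_X]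
    have hpowD : ((1 - PowerSeries.X : PowerSeries ℤ)) ^ D = ∏ u ∈ F, (1 - PowerSeries.X) ^ (m u - 2) := by
      rw [Finset.prod_pow_eq_pow_sum, hD]
    have hRD : Rser = (1 - PowerSeries.X) ^ D * Polynomial.eval₂ (PowerSeries.C (R := ℤ)) sub Q := by
      rw [hQeval, hpowD, ← Finset.prod_mul_distrib, hR]
      refine Finset.prod_congr rfl fun u hu => ?_
      rw [← mul_pow, hfac u hu]
    rw [hRD, heval, Finset.mul_sum]
    refine Finset.sum_congr rfl fun j hj => ?_
    simp only [Finset.mem_range] at hj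
    have hjD : j ≤ D := Nat.lt_succ_iff.mp hj
    have hsplit : (1 - PowerSeries.X : PowerSeries ℤ) ^ D
        = (1 - PowerSeries.X) ^ (D - j) * (1 - PowerSeries.X) ^ j := by
      rw [← pow_add]
      congr 1
      omega
    rw [hsub, mul_pow, hsplit]
    have hcxw : (1 - PowerSeries.X : PowerSeries ℤ) ^ j * w ^ j = 1 := by
      rw [← mul_pow, hw1, one_pow]
    calc (1 - PowerSeries.X : PowerSeries ℤ) ^ (D - j) * (1 - PowerSeries.X) ^ j *
          (PowerSeries.C (R := ℤ) (Q.coeff j) * (PowerSeries.X ^ j * w ^ j))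
        = PowerSeries.C (R := ℤ) (Q.coeff j) * (PowerSeries.X ^ j * (1 - PowerSeries.X) ^ (D - j)) *
          ((1 - PowerSeries.X) ^ j * w ^ j) := by ring
      _ = PowerSeries.C (R := ℤ) (Q.coeff j) * (PowerSeries.X ^ j * (1 - PowerSeries.X) ^ (D - j)) := by
          rw [hcxw, mul_one]
  -- main series identity
  have hkey : (PowerSeries.invOneSubPow ℤ k).val * Rser
      = ∑ j ∈ Finset.range (D + 1),
        PowerSeries.C (R := ℤ) (Q.coeff j) * (PowerSeries.X ^ j * (PowerSeries.invOneSubPow ℤ (K + j)).val) := by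
    have hmain : Rser = ((1 - PowerSeries.X) ^ k : PowerSeries ℤ) *
        ∑ j ∈ Finset.range (D + 1),
          PowerSeries.C (R := ℤ) (Q.coeff j) * (PowerSeries.X ^ j * (PowerSeries.invOneSubPow ℤ (K + j)).val) := by
      rw [Finset.mul_sum, hRQ]
      refine Finset.sum_congr rfl fun j hj => ?_
      simp only [Finset.mem_range] at hj
      have hjD : j ≤ D := Nat.lt_succ_iff.mp hj
      have hksplit : ((1 - PowerSeries.X) ^ k : PowerSeries ℤ)
          = (1 - PowerSeries.X) ^ (D - j) * (1 - PowerSeries.X) ^ (K + j) := by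
        rw [← pow_add]
        congr 1
        omega
      have hIc : ((1 - PowerSeries.X) ^ (K + j) : PowerSeries ℤ) *
          (PowerSeries.invOneSubPow ℤ (K + j)).val = 1 := by
        rw [← PowerSeries.invOneSubPow_inv_eq_one_sub_pow]
        exact (PowerSeries.invOneSubPow ℤ (K + j)).inv_val
      rw [hksplit]
      calc PowerSeries.C (R := ℤ) (Q.coeff j) * (PowerSeries.X ^ j * (1 - PowerSeries.X) ^ (D - j))
          = (1 - PowerSeries.X) ^ (D - j) *
            (PowerSeries.C (R := ℤ) (Q.coeff j) * PowerSeries.X ^ j) := by ring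
        _ = (1 - PowerSeries.X) ^ (D - j) * (1 - PowerSeries.X) ^ (K + j) *
            (PowerSeries.C (R := ℤ) (Q.coeff j) * (PowerSeries.X ^ j *
              (PowerSeries.invOneSubPow ℤ (K + j)).val)) := by
            rw [show (1 - PowerSeries.X : PowerSeries ℤ) ^ (D - j) * (1 - PowerSeries.X) ^ (K + j) *
              (PowerSeries.C (R := ℤ) (Q.coeff j) * (PowerSeries.X ^ j *
                (PowerSeries.invOneSubPow ℤ (K + j)).val))
              = (1 - PowerSeries.X) ^ (D - j) * (PowerSeries.C (R := ℤ) (Q.coeff j) * PowerSeries.X ^ j) *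
                ((1 - PowerSeries.X) ^ (K + j) * (PowerSeries.invOneSubPow ℤ (K + j)).val) from by ring,
              hIc, mul_one]
    rw [hmain, ← mul_assoc, hval, one_mul]
  -- put it together
  rw [hinv, hkey, hL, map_sum]
  have hterm : ∀ j ∈ Finset.range (D + 1),
      (PowerSeries.coeff (R := ℤ) i) (PowerSeries.C (R := ℤ) (Q.coeff j) *
        (PowerSeries.X ^ j * (PowerSeries.invOneSubPow ℤ (K + j)).val))
      = if j ≤ i then N.choose (i - j) * Q.coeff j else 0 := by
    intro j hj
    rw [PowerSeries.coeff_C_mul, PowerSeries.coeff_X_pow_mul']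
    split_ifs with h
    · rw [PowerSeries.invOneSubPow_val_eq_mk_sub_one_add_choose_of_pos _ _ (by omega),
        PowerSeries.coeff_mk]
      have h1 : K + j - 1 + (i - j) = N := by omega
      have h2 : (K + j - 1) = N - (i - j) := by omega
      rw [h1, h2, Nat.choose_symm (by omega)]
      ring
    · simp
  rw [Finset.sum_congr rfl hterm]
  -- unify the two sums
  have hLf : ∑ j ∈ Finset.range (i + 1), (N.choose (i - j) : ℤ) * Q.coeff j
      = ∑ j ∈ Finset.range (i + 1), (if j ≤ i then (N.choose (i - j) : ℤ) * Q.coeff j else 0) := by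
    refine Finset.sum_congr rfl fun j hj => ?_
    simp only [Finset.mem_range] at hj
    rw [if_pos (by omega)]
  rw [hLf]
  rcases le_total (i + 1) (D + 1) with hcase | hcase
  · rw [Finset.sum_subset (Finset.range_subset_range.mpr hcase)]
    intro x hx hxn
    simp only [Finset.mem_range] at hxn
    rw [if_neg (by omega)]
  · rw [(Finset.sum_subset (Finset.range_subset_range.mpr hcase) ?_).symm]
    intro x hx hxn
    simp only [Finset.mem_range] at hxn
    rw [Polynomial.coeff_eq_zero_of_natDegree_lt (by omega)]
    simp
end

section
/- Let r ≥ 1 and 1 ≤ k ≤ r be integers, let m₁ = ⋯ = m_k = 1, and let m_{k+1}, …, m_r be integers with m_u ≥ 2 for every u > k; set c₁ = ∑_{u=1}^r m_u and assume c₁ < 2r. Then for every integer i ≥ 0, ∑_{j=0}^i (−1)^j · C(2r−c₁−1+i, i−j) · ( ∑_{(j_{k+1},…,j_r) ∈ ℕ^{r−k}, j_{k+1}+⋯+j_r = j} ∏_{u=k+1}^r C(m_u−2, j_u)·(m_u−1)^{j_u} ) = ∑_{j=0}^i h_{i−j}(m₁,…,m_r) · ( ∑_{(j₁,…,j_r)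 ∈ ℕ^r, j₁+⋯+j_r = j} ∏_{u=1}^r C(m_u−1, j_u)·(−m_u)^{j_u} ). -/
open Finset PowerSeries

/-- The complete homogeneous symmetric polynomial of degree `i` evaluated at
`(m 0, …, m (r-1))`:  `h_i(m) = ∑_{j₁+⋯+j_r = i} ∏_u m_u^{j_u}`. -/
def completeHom (r : ℕ) (m : Fin r → ℕ) (i : ℕ) : ℤ :=
  ∑ j ∈ Finset.Nat.antidiagonalTuple r i, ∏ u, (m u : ℤ) ^ j u

/-- The inclusion `Fin (r-k) → Fin r` sending `v` to `k + v`, used to index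
the tuple `(m_{k+1}, …, m_r)` (0-indexed: entries `k, …, r-1`). -/
def finShift (r k : ℕ) (hkr : k ≤ r) (v : Fin (r - k)) : Fin r :=
  ⟨k + v, by have := v.isLt; omega⟩

/-- `∑_{j₁+⋯+j_n = j} ∏_v C(e_v, j_v) c_v^{j_v}`. -/
def aSum (n : ℕ) (e : Fin n → ℕ) (c : Fin n → ℤ) (j : ℕ) : ℤ :=
  ∑ jv ∈ Finset.Nat.antidiagonalTuple n j, ∏ v, ((e v).choose (jv v) : ℤ) * c v ^ jv v

lemma aux_coeff_prod {n d : ℕ} (f : Fin n → PowerSeries ℤ) :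
    (PowerSeries.coeff d) (∏ u, f u)
      = ∑ jv ∈ Finset.Nat.antidiagonalTuple n d, ∏ u, (PowerSeries.coeff (jv u)) (f u) := by
  rw [PowerSeries.coeff_prod]
  refine Finset.sum_nbij' (fun l => ⇑l) (fun g => Finsupp.equivFunOnFinite.symm g) ?_ ?_ ?_ ?_ ?_
  · intro l hl
    rw [Finset.mem_finsuppAntidiag] at hl
    rw [Finset.Nat.mem_antidiagonalTuple]
    exact hl.1
  · intro g hg
    rw [Finset.Nat.mem_antidiagonalTuple] at hg
    rw [Finset.mem_finsuppAntidiag]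
    exact ⟨hg, Finset.subset_univ _⟩
  · intro l _; exact Finsupp.equivFunOnFinite.symm_apply_apply l
  · intro g _; rfl
  · intro l _; rfl

lemma aux_coeff_one_add (c : ℤ) (e j : ℕ) :
    ((1 + Polynomial.C c * Polynomial.X) ^ e).coeff j = (e.choose j : ℤ) * c ^ j := by
  rw [add_comm, add_pow]
  simp only [mul_pow, one_pow, mul_one, Polynomial.finset_sum_coeff]
  rw [Finset.sum_eq_single j]
  · rw [← Polynomial.C_pow, ← Polynomial.C_eq_natCast, mul_assoc, Polynomial.coeff_C_mul,
      Polynomial.coeff_mul_C, Polynomial.coeff_X_pow, if_pos rfl]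
    ring
  · intro t _ h
    rw [← Polynomial.C_pow, ← Polynomial.C_eq_natCast, mul_assoc, Polynomial.coeff_C_mul,
      Polynomial.coeff_mul_C, Polynomial.coeff_X_pow, if_neg (fun hh => h hh.symm)]
    ring
  · intro h
    rw [Finset.mem_range, not_lt] at h
    rw [← Polynomial.C_pow, ← Polynomial.C_eq_natCast, mul_assoc, Polynomial.coeff_C_mul,
      Polynomial.coeff_mul_C, Polynomial.coeff_X_pow, if_pos rfl,
      Nat.choose_eq_zero_of_lt (by omega)]
    ring

lemma aux_vanish {n : ℕ} (e : Fin n → ℕ) (c : Fin n → ℤ) {j : ℕ} (hj : ∑ v, e v < j) :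
    aSum n e c j = 0 := by
  refine Finset.sum_eq_zero fun jv hjv => ?_
  rw [Finset.Nat.mem_antidiagonalTuple] at hjv
  obtain ⟨v, hv⟩ : ∃ v, e v < jv v := by
    by_contra h
    push_neg at h
    have := Finset.sum_le_sum (s := Finset.univ) fun v (_ : v ∈ Finset.univ) => h v
    omega
  refine Finset.prod_eq_zero (Finset.mem_univ v) ?_
  rw [Nat.choose_eq_zero_of_lt hv]
  simp

lemma geom (a : ℤ) :
    ((1 : PowerSeries ℤ) - ((a : ℤ) : PowerSeries ℤ) * PowerSeries.X) *
      PowerSeries.mk (fun t => a ^ t) = 1 := by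
  rw [show ((a : ℤ) : PowerSeries ℤ) = PowerSeries.C a from (eq_intCast (PowerSeries.C) a).symm]
  ext n
  rw [sub_mul, one_mul, map_sub]
  cases n with
  | zero => simp
  | succ n =>
    rw [mul_assoc, PowerSeries.coeff_C_mul, PowerSeries.coeff_succ_X_mul]
    simp [pow_succ, mul_comm]

lemma homog {n : ℕ} (e : Fin n → ℕ) (c : Fin n → ℤ) :
    ∑ j ∈ Finset.range (∑ v, e v + 1),
        (((-1 : ℤ) ^ j * aSum n e c j : ℤ) : PowerSeries ℤ) *
          (PowerSeries.X ^ j * (1 - PowerSeries.X) ^ (∑ v, e v - j))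
      = ∏ v, ((1 : PowerSeries ℤ) - ((c v + 1 : ℤ) : PowerSeries ℤ) * PowerSeries.X) ^ e v := by
  unfold aSum
  set s := ∑ v, e v with hs
  set Ap : Polynomial ℤ := ∏ v, (1 + Polynomial.C (c v) * Polynomial.X) ^ e v with hAp
  have hcoeff : ∀ j, Ap.coeff j
      = ∑ jv ∈ Finset.Nat.antidiagonalTuple n j,
          ∏ v, ((e v).choose (jv v) : ℤ) * c v ^ jv v := by
    intro j
    have h1 : ((Ap : Polynomial ℤ) : PowerSeries ℤ)
        = ∏ v, (((1 + Polynomial.C (c v) * Polynomial.X) ^ e v : Polynomial ℤ) : PowerSeries ℤ) := by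
      rw [hAp, ← Polynomial.coeToPowerSeries.ringHom_apply, map_prod]
      simp only [Polynomial.coeToPowerSeries.ringHom_apply]
    have := aux_coeff_prod (n := n) (d := j)
      (fun v => (((1 + Polynomial.C (c v) * Polynomial.X) ^ e v : Polynomial ℤ) : PowerSeries ℤ))
    rw [← h1, Polynomial.coeff_coe] at this
    rw [this]
    refine Finset.sum_congr rfl fun jv _ => Finset.prod_congr rfl fun v _ => ?_
    rw [Polynomial.coeff_coe, aux_coeff_one_add]
  have hdeg : Ap.natDegree < s + 1 := by
    have : Ap.natDegree ≤ s := by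
      rw [Polynomial.natDegree_le_iff_coeff_eq_zero]
      intro N hN
      rw [hcoeff]
      exact aux_vanish e c hN
    omega
  set u : PowerSeries ℤ := ((PowerSeries.invOneSubPow ℤ 1 : (PowerSeries ℤ)ˣ) : PowerSeries ℤ)
    with hu_def
  have hu : u * (1 - PowerSeries.X) = 1 := by
    have h := (PowerSeries.invOneSubPow ℤ 1).val_inv
    rwa [PowerSeries.invOneSubPow_inv_eq_one_sub_pow, pow_one] at h
  set y : PowerSeries ℤ := -(PowerSeries.X * u) with hy
  have heval := Polynomial.aeval_eq_sum_range' hdeg y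
  have hmul := congrArg (· * (1 - PowerSeries.X) ^ s) heval
  rw [Finset.sum_mul] at hmul
  have hrhs : ∀ j ∈ Finset.range (s + 1),
      Ap.coeff j • y ^ j * (1 - PowerSeries.X) ^ s
        = ((((-1 : ℤ) ^ j * ∑ jv ∈ Finset.Nat.antidiagonalTuple n j,
            ∏ v, ((e v).choose (jv v) : ℤ) * c v ^ jv v : ℤ)) : PowerSeries ℤ) *
          (PowerSeries.X ^ j * (1 - PowerSeries.X) ^ (s - j)) := by
    intro j hj
    rw [Finset.mem_range] at hj
    have hsj : (1 - PowerSeries.X : PowerSeries ℤ) ^ s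
        = (1 - PowerSeries.X) ^ j * (1 - PowerSeries.X) ^ (s - j) := by
      rw [← pow_add]; congr 1; omega
    set S : ℤ := ∑ jv ∈ Finset.Nat.antidiagonalTuple n j,
        ∏ v, ((e v).choose (jv v) : ℤ) * c v ^ jv v with hS
    rw [zsmul_eq_mul, hcoeff j, hsj, hy, neg_pow, mul_pow, Int.cast_mul, Int.cast_pow,
      Int.cast_neg, Int.cast_one]
    have h1 : u ^ j * (1 - PowerSeries.X) ^ j = 1 := by rw [← mul_pow, hu, one_pow]
    linear_combination ((-1 : PowerSeries ℤ) ^ j * (S : PowerSeries ℤ) * PowerSeries.X ^ j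
      * (1 - PowerSeries.X) ^ (s - j)) * h1
  erw [Finset.sum_congr rfl hrhs] at hmul
  rw [← hmul]
  rw [hAp, map_prod, ← Finset.prod_pow_eq_pow_sum, ← Finset.prod_mul_distrib]
  refine Finset.prod_congr rfl fun v _ => ?_
  rw [map_pow, ← mul_pow]
  congr 1
  have hu' : u * (1 - PowerSeries.X) = 1 := hu
  rw [map_add, map_one, map_mul, Polynomial.aeval_C, Polynomial.aeval_X]
  have halg : (algebraMap ℤ (PowerSeries ℤ)) (c v) = ((c v : ℤ) : PowerSeries ℤ) := by
    simp [algebraMap_int_eq, eq_intCast]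
  rw [halg, hy]
  push_cast
  linear_combination (-(c v : PowerSeries ℤ) * PowerSeries.X) * hu'

lemma coeff_G (N s i : ℕ) (a : ℕ → ℤ) :
    PowerSeries.coeff i (∑ j ∈ Finset.range (s + 1),
        (((-1 : ℤ) ^ j * a j : ℤ) : PowerSeries ℤ) *
          (PowerSeries.X ^ j * ((PowerSeries.invOneSubPow ℤ (N + j + 1) : (PowerSeries ℤ)ˣ) : PowerSeries ℤ)))
      = ∑ j ∈ Finset.range (s + 1),
          if j ≤ i then (-1 : ℤ) ^ j * ((N + i).choose (i - j) : ℤ) * a j else 0 := by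
  rw [map_sum]
  refine Finset.sum_congr rfl fun j _ => ?_
  rw [show (((-1 : ℤ) ^ j * a j : ℤ) : PowerSeries ℤ)
      = PowerSeries.C ((-1) ^ j * a j) from (eq_intCast (PowerSeries.C) _).symm,
    PowerSeries.coeff_C_mul, PowerSeries.coeff_X_pow_mul']
  split_ifs with h
  · rw [PowerSeries.invOneSubPow_val_succ_eq_mk_add_choose, PowerSeries.coeff_mk]
    rw [show N + j + (i - j) = N + i by omega,
      show (N + i).choose (N + j) = (N + i).choose (i - j) by
        rw [← Nat.choose_symm (by omega : N + j ≤ N + i)]; congr 1; omega]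
    ring
  · simp

lemma G_mul (N s : ℕ) (a : ℕ → ℤ) :
    (∑ j ∈ Finset.range (s + 1),
        (((-1 : ℤ) ^ j * a j : ℤ) : PowerSeries ℤ) *
          (PowerSeries.X ^ j * ((PowerSeries.invOneSubPow ℤ (N + j + 1) : (PowerSeries ℤ)ˣ) : PowerSeries ℤ)))
      * (1 - PowerSeries.X) ^ (N + 1 + s)
    = ∑ j ∈ Finset.range (s + 1),
        (((-1 : ℤ) ^ j * a j : ℤ) : PowerSeries ℤ) *
          (PowerSeries.X ^ j * (1 - PowerSeries.X) ^ (s - j)) := by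
  rw [Finset.sum_mul]
  refine Finset.sum_congr rfl fun j hj => ?_
  rw [Finset.mem_range] at hj
  have hpow : (1 - PowerSeries.X : PowerSeries ℤ) ^ (N + 1 + s)
      = (1 - PowerSeries.X) ^ (N + j + 1) * (1 - PowerSeries.X) ^ (s - j) := by
    rw [← pow_add]; congr 1; omega
  have hinv : ((PowerSeries.invOneSubPow ℤ (N + j + 1) : (PowerSeries ℤ)ˣ) : PowerSeries ℤ)
      * (1 - PowerSeries.X : PowerSeries ℤ) ^ (N + j + 1) = 1 := by
    have h := (PowerSeries.invOneSubPow ℤ (N + j + 1)).val_inv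
    rwa [PowerSeries.invOneSubPow_inv_eq_one_sub_pow] at h
  rw [hpow]
  linear_combination ((((-1 : ℤ) ^ j * a j : ℤ) : PowerSeries ℤ) * PowerSeries.X ^ j
    * (1 - PowerSeries.X) ^ (s - j)) * hinv

@[to_additive]
lemma prod_split {M : Type*} [CommMonoid M] (r k : ℕ) (hkr : k ≤ r) (f : Fin r → M) :
    ∏ u, f u = (∏ v : Fin k, f (Fin.castLE hkr v)) * ∏ v : Fin (r - k), f (finShift r k hkr v) := by
  classical
  rw [← Finset.prod_filter_mul_prod_filter_not Finset.univ (fun u : Fin r => (u : ℕ) < k)]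
  congr 1
  · rw [show Finset.filter (fun u : Fin r => (u : ℕ) < k) Finset.univ
        = Finset.map ⟨Fin.castLE hkr, Fin.castLE_injective hkr⟩ Finset.univ by
      ext u
      constructor
      · intro hu
        have h : (u : ℕ) < k := (Finset.mem_filter.1 hu).2
        exact Finset.mem_map.2 ⟨⟨(u : ℕ), h⟩, Finset.mem_univ _, Fin.ext rfl⟩
      · intro hu
        obtain ⟨v, -, rfl⟩ := Finset.mem_map.1 hu
        exact Finset.mem_filter.2 ⟨Finset.mem_univ _, v.isLt⟩]
    rw [Finset.prod_map]
    rfl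
  · rw [show Finset.filter (fun u : Fin r => ¬ (u : ℕ) < k) Finset.univ
        = Finset.map ⟨finShift r k hkr, fun a b h => by
            have : k + (a : ℕ) = k + (b : ℕ) := congrArg Fin.val h
            exact Fin.ext (by omega)⟩ Finset.univ by
      ext u
      constructor
      · intro hu
        have h : ¬ (u : ℕ) < k := (Finset.mem_filter.1 hu).2
        refine Finset.mem_map.2 ⟨⟨(u : ℕ) - k, by have := u.isLt; omega⟩, Finset.mem_univ _, ?_⟩
        exact Fin.ext (by show k + ((u : ℕ) - k) = (u : ℕ); omega)
      · intro hu
        obtain ⟨v, -, rfl⟩ := Finset.mem_map.1 hu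
        refine Finset.mem_filter.2 ⟨Finset.mem_univ _, ?_⟩
        show ¬ (k + (v : ℕ) < k)
        omega]
    rw [Finset.prod_map]
    rfl

lemma coeff_Q_factor (a e t : ℕ) :
    PowerSeries.coeff t (((1 : PowerSeries ℤ) - ((a : ℤ) : PowerSeries ℤ) * PowerSeries.X) ^ e)
      = (e.choose t : ℤ) * (-(a : ℤ)) ^ t := by
  have hcast : ((1 : PowerSeries ℤ) - ((a : ℤ) : PowerSeries ℤ) * PowerSeries.X)
      = (((1 + Polynomial.C (-(a : ℤ)) * Polynomial.X : Polynomial ℤ)) : PowerSeries ℤ) := by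
    rw [Polynomial.coe_add, Polynomial.coe_one, Polynomial.coe_mul, Polynomial.coe_C,
      Polynomial.coe_X,
      show (PowerSeries.C) (-(a : ℤ)) = ((-(a : ℤ) : ℤ) : PowerSeries ℤ) from eq_intCast _ _]
    push_cast
    ring
  rw [hcast, ← Polynomial.coe_pow, Polynomial.coeff_coe, aux_coeff_one_add]

/-- The identity `W_i = T̃_i` at the numerical core of Proposition 5.14:
with `m₁ = ⋯ = m_k = 1`, `m_u ≥ 2` for `u > k`, and `c₁ = ∑ m_u < 2r`,
`∑_{j=0}^i (−1)^j C(2r−c₁−1+i, i−j) ∑_{j_{k+1}+⋯+j_r = j} ∏_{u>k} C(m_u−2, j_u)(m_u−1)^{j_u}`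
equals `∑_{j=0}^i h_{i−j}(m₁,…,m_r) ∑_{j₁+⋯+j_r = j} ∏_{u=1}^r C(m_u−1, j_u)(−m_u)^{j_u}`. -/
theorem GW_invariant_eq_classical_intersection
    (r k : ℕ) (hr : 1 ≤ r) (hk : 1 ≤ k) (hkr : k ≤ r)
    (m : Fin r → ℕ)
    (h1 : ∀ u : Fin r, (u : ℕ) < k → m u = 1)
    (h2 : ∀ u : Fin r, k ≤ (u : ℕ) → 2 ≤ m u)
    (c₁ : ℕ) (hc₁ : c₁ = ∑ u, m u) (hlt : c₁ < 2 * r) (i : ℕ) :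
    (∑ j ∈ Finset.range (i + 1),
        (-1 : ℤ) ^ j * (Nat.choose (2 * r - c₁ - 1 + i) (i - j) : ℤ) *
          ∑ jv ∈ Finset.Nat.antidiagonalTuple (r - k) j,
            ∏ v, ((m (finShift r k hkr v) - 2).choose (jv v) : ℤ) *
              ((m (finShift r k hkr v) : ℤ) - 1) ^ jv v)
    = ∑ j ∈ Finset.range (i + 1),
        completeHom r m (i - j) *
          ∑ jv ∈ Finset.Nat.antidiagonalTuple r j,
            ∏ u, ((m u - 1).choose (jv u) : ℤ) * (-(m u : ℤ)) ^ jv u := by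
  have hm2 : ∀ v : Fin (r - k), 2 ≤ m (finShift r k hkr v) :=
    fun v => h2 _ (Nat.le_add_right k v)
  set N := 2 * r - c₁ - 1 with hN
  set s := ∑ v : Fin (r - k), (m (finShift r k hkr v) - 2) with hs
  -- numeric facts
  have hA : c₁ = k + ∑ v : Fin (r - k), m (finShift r k hkr v) := by
    rw [hc₁, sum_split r k hkr m]
    congr 1
    calc ∑ v : Fin k, m (Fin.castLE hkr v) = ∑ _v : Fin k, 1 :=
          Finset.sum_congr rfl fun v _ => h1 _ v.isLt
      _ = k := by simp
  have hB : s + 2 * (r - k) = ∑ v : Fin (r - k), m (finShift r k hkr v) := by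
    rw [hs]
    calc (∑ v : Fin (r - k), (m (finShift r k hkr v) - 2)) + 2 * (r - k)
        = ∑ v : Fin (r - k), ((m (finShift r k hkr v) - 2) + 2) := by
          rw [Finset.sum_add_distrib, Finset.sum_const, Finset.card_univ, Fintype.card_fin,
            smul_eq_mul, mul_comm]
      _ = _ := Finset.sum_congr rfl fun v _ => by have := hm2 v; omega
  have hNk : N + 1 + s = k := by
    set A := ∑ v : Fin (r - k), m (finShift r k hkr v)
    omega
  -- the coefficient function
  set a : ℕ → ℤ := aSum (r - k) (fun v => m (finShift r k hkr v) - 2)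
      (fun v => (m (finShift r k hkr v) : ℤ) - 1) with ha
  have havan : ∀ j, s < j → a j = 0 := by
    intro j hj
    exact aux_vanish _ _ (by rw [← hs]; exact hj)
  -- power series
  set G : PowerSeries ℤ := ∑ j ∈ Finset.range (s + 1),
      (((-1 : ℤ) ^ j * a j : ℤ) : PowerSeries ℤ) *
        (PowerSeries.X ^ j *
          ((PowerSeries.invOneSubPow ℤ (N + j + 1) : (PowerSeries ℤ)ˣ) : PowerSeries ℤ)) with hG
  set H : PowerSeries ℤ := ∏ u, PowerSeries.mk (fun t => ((m u : ℤ)) ^ t) with hH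
  set Q : PowerSeries ℤ := ∏ u,
      ((1 : PowerSeries ℤ) - ((m u : ℤ) : PowerSeries ℤ) * PowerSeries.X) ^ (m u - 1) with hQ
  set P : PowerSeries ℤ := ∏ v : Fin (r - k),
      ((1 : PowerSeries ℤ) - ((m (finShift r k hkr v) : ℤ) : PowerSeries ℤ) * PowerSeries.X) ^
        (m (finShift r k hkr v) - 2) with hP
  -- (C1) G * (1-X)^k = P
  have hGP : G * (1 - PowerSeries.X) ^ k = P := by
    rw [hG, ← hNk, G_mul N s a]
    have hhom := homog (n := r - k) (fun v => m (finShift r k hkr v) - 2)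
      (fun v => (m (finShift r k hkr v) : ℤ) - 1)
    rw [← hs, ← ha] at hhom
    rw [hhom, hP]
    refine Finset.prod_congr rfl fun v _ => ?_
    congr 2
    push_cast
    ring
  -- (C2) H * Q * (1-X)^k = P
  have hHQP : H * Q * (1 - PowerSeries.X) ^ k = P := by
    rw [hH, hQ, ← Finset.prod_mul_distrib]
    rw [prod_split r k hkr (fun u => PowerSeries.mk (fun t => ((m u : ℤ)) ^ t) *
      ((1 : PowerSeries ℤ) - ((m u : ℤ) : PowerSeries ℤ) * PowerSeries.X) ^ (m u - 1))]
    have hpk : ((1 - PowerSeries.X : PowerSeries ℤ)) ^ k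
        = ∏ _v : Fin k, (1 - PowerSeries.X : PowerSeries ℤ) := by
      rw [Finset.prod_const, Finset.card_univ, Fintype.card_fin]
    rw [hpk, mul_right_comm, ← Finset.prod_mul_distrib]
    have hone : ∀ v : Fin k,
        (PowerSeries.mk (fun t => ((m (Fin.castLE hkr v) : ℤ)) ^ t) *
          ((1 : PowerSeries ℤ) - ((m (Fin.castLE hkr v) : ℤ) : PowerSeries ℤ) * PowerSeries.X) ^
            (m (Fin.castLE hkr v) - 1)) * (1 - PowerSeries.X) = 1 := by
      intro v
      have h1v : m (Fin.castLE hkr v) = 1 := h1 _ v.isLt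
      rw [h1v]
      have hg := geom 1
      rw [Int.cast_one] at hg
      simp only [Nat.sub_self, pow_zero, mul_one, Nat.cast_one]
      calc PowerSeries.mk (fun t => ((1 : ℤ)) ^ t) * (1 - PowerSeries.X)
          = (1 - ((1 : ℤ) : PowerSeries ℤ) * PowerSeries.X) *
              PowerSeries.mk (fun t => (1 : ℤ) ^ t) := by push_cast; ring
        _ = 1 := geom 1
    rw [Finset.prod_congr rfl (fun v _ => hone v), Finset.prod_const_one, one_mul, hP]
    refine Finset.prod_congr rfl fun v _ => ?_
    have hg := geom ((m (finShift r k hkr v) : ℤ))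
    rw [show m (finShift r k hkr v) - 1 = (m (finShift r k hkr v) - 2) + 1 by
      have := hm2 v; omega, pow_add, pow_one]
    linear_combination (((1 : PowerSeries ℤ) -
      ((m (finShift r k hkr v) : ℤ) : PowerSeries ℤ) * PowerSeries.X) ^
        (m (finShift r k hkr v) - 2)) * hg
  -- (C3) G = H * Q
  have hunit : IsUnit ((1 - PowerSeries.X : PowerSeries ℤ) ^ k) := by
    refine IsUnit.pow k ⟨(PowerSeries.invOneSubPow ℤ 1)⁻¹, ?_⟩
    rw [show (((PowerSeries.invOneSubPow ℤ 1)⁻¹ : (PowerSeries ℤ)ˣ) : PowerSeries ℤ)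
        = (PowerSeries.invOneSubPow ℤ 1).inv from rfl,
      PowerSeries.invOneSubPow_inv_eq_one_sub_pow, pow_one]
  have hGH : G = H * Q := hunit.mul_right_cancel (by rw [hGP, hHQP])
  -- coefficient extraction: LHS
  have hL : (∑ j ∈ Finset.range (i + 1),
        (-1 : ℤ) ^ j * (Nat.choose (N + i) (i - j) : ℤ) *
          ∑ jv ∈ Finset.Nat.antidiagonalTuple (r - k) j,
            ∏ v, ((m (finShift r k hkr v) - 2).choose (jv v) : ℤ) *
              ((m (finShift r k hkr v) : ℤ) - 1) ^ jv v)
      = PowerSeries.coeff i G := by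
    have hterm : ∀ j, (∑ jv ∈ Finset.Nat.antidiagonalTuple (r - k) j,
        ∏ v, ((m (finShift r k hkr v) - 2).choose (jv v) : ℤ) *
          ((m (finShift r k hkr v) : ℤ) - 1) ^ jv v) = a j := fun j => rfl
    rw [hG, coeff_G N s i a]
    have e1 : (∑ j ∈ Finset.range (i + 1),
          (-1 : ℤ) ^ j * (Nat.choose (N + i) (i - j) : ℤ) *
            ∑ jv ∈ Finset.Nat.antidiagonalTuple (r - k) j,
              ∏ v, ((m (finShift r k hkr v) - 2).choose (jv v) : ℤ) *
                ((m (finShift r k hkr v) : ℤ) - 1) ^ jv v)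
        = ∑ j ∈ Finset.range (i + 1),
            (if j ≤ i then (-1 : ℤ) ^ j * ((N + i).choose (i - j) : ℤ) * a j else 0) := by
      refine Finset.sum_congr rfl fun j hj => ?_
      rw [Finset.mem_range] at hj
      rw [hterm j, if_pos (by omega)]
    have e2 : (∑ j ∈ Finset.range (i + 1),
          (if j ≤ i then (-1 : ℤ) ^ j * ((N + i).choose (i - j) : ℤ) * a j else 0))
        = ∑ j ∈ Finset.range (max i s + 1),
            (if j ≤ i then (-1 : ℤ) ^ j * ((N + i).choose (i - j) : ℤ) * a j else 0) := by
      clear e1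
      refine Finset.sum_subset (Finset.range_subset_range.2 (by omega)) ?_
      intro j _ hj
      rw [Finset.mem_range, not_lt] at hj
      rw [if_neg (by omega)]
    have e3 : (∑ j ∈ Finset.range (s + 1),
          (if j ≤ i then (-1 : ℤ) ^ j * ((N + i).choose (i - j) : ℤ) * a j else 0))
        = ∑ j ∈ Finset.range (max i s + 1),
            (if j ≤ i then (-1 : ℤ) ^ j * ((N + i).choose (i - j) : ℤ) * a j else 0) := by
      clear e1 e2
      refine Finset.sum_subset (Finset.range_subset_range.2 (by omega)) ?_
      intro j _ hj
      rw [Finset.mem_range, not_lt] at hj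
      rw [havan j (by omega)]
      split_ifs <;> ring
    rw [e1, e2, ← e3]
  -- coefficient extraction: RHS
  have hR : PowerSeries.coeff i (H * Q)
      = ∑ j ∈ Finset.range (i + 1),
          completeHom r m (i - j) *
            ∑ jv ∈ Finset.Nat.antidiagonalTuple r j,
              ∏ u, ((m u - 1).choose (jv u) : ℤ) * (-(m u : ℤ)) ^ jv u := by
    rw [mul_comm, PowerSeries.coeff_mul, Finset.Nat.sum_antidiagonal_eq_sum_range_succ_mk]
    refine Finset.sum_congr rfl fun j _ => ?_
    have hq : PowerSeries.coeff j Q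
        = ∑ jv ∈ Finset.Nat.antidiagonalTuple r j,
            ∏ u, ((m u - 1).choose (jv u) : ℤ) * (-(m u : ℤ)) ^ jv u := by
      rw [hQ, aux_coeff_prod]
      exact Finset.sum_congr rfl fun jv _ => Finset.prod_congr rfl fun u _ =>
        coeff_Q_factor (m u) (m u - 1) (jv u)
    have hh : PowerSeries.coeff (i - j) H = completeHom r m (i - j) := by
      rw [hH, aux_coeff_prod]
      unfold completeHom
      exact Finset.sum_congr rfl fun jv _ => Finset.prod_congr rfl fun u _ => by
        rw [PowerSeries.coeff_mk]
    rw [hq, hh]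
    ring
  rw [hL, hGH, hR]
end
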